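/- Let x_1,...,x_d be vectors in a Hilbert space with positive definite Gram matrix Σ. For distinct i, j and S ⊆ [d]\{i,j}, the determinant of the submatrix Σ_{S∪{i}, S∪{j}} is zero if and only if P_i (I − P_S) P_j = 0. -/

import Mathlib

theorem stmt_11 {H : Type*} [NormedAddCommGroup H] [InnerProductSpace ℝ H] [CompleteSpace H]
    {d : ℕ} (x : Fin d → H)
    (hGram : (Matrix.of fun (i j : Fin d) => (inner ℝ (x i) (x j) : ℝ)).PosDef)
    (P : Finset (Fin d) → H →L[ℝ] H)
    (hsa : ∀ A, IsSelfAdjoint (P A))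
    (hidem : ∀ A, P A * P A = P A)
    (hrange : ∀ A : Finset (Fin d), LinearMap.range (P A : H →ₗ[ℝ] H) = Submodule.span ℝ (x '' ↑A))
    (i j : Fin d) (hij : i ≠ j) (S : Finset (Fin d)) (hiS : i ∉ S) (hjS : j ∉ S) :
    (Matrix.of fun (a b : ↥(insert i S)) =>
        (inner ℝ (x (a : Fin d)) (x (if (b : Fin d) = i then j else (b : Fin d))) : ℝ)).det = 0 ↔
      P {i} * (1 - P S) * P {j} = 0 := by
  classical
  -- linear independence of x
  have hli : LinearIndependent ℝ x := by
    rw [Fintype.linearIndependent_iff]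
    intro g hg k
    by_contra hk
    have hg0 : g ≠ 0 := fun h => hk (by rw [h]; rfl)
    have hpos : 0 < dotProduct g
        ((Matrix.of fun (a b : Fin d) => (inner ℝ (x a) (x b) : ℝ)).mulVec g) := by
      simpa using hGram.dotProduct_mulVec_pos hg0
    have heq : dotProduct g
        ((Matrix.of fun (a b : Fin d) => (inner ℝ (x a) (x b) : ℝ)).mulVec g)
        = (inner ℝ (∑ a, g a • x a) (∑ b, g b • x b) : ℝ) := by
      simp only [sum_inner, inner_sum, real_inner_smul_left, real_inner_smul_right,
        dotProduct, Matrix.mulVec, Matrix.of_apply, Finset.mul_sum]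
      refine Finset.sum_congr rfl fun a _ => Finset.sum_congr rfl fun b _ => by rw [real_inner_comm (x b) (x a)]; ring
    rw [heq, hg, inner_zero_left] at hpos
    exact lt_irrefl 0 hpos
  have hsym : ∀ (A : Finset (Fin d)) (u v : H), (inner ℝ (P A u) v : ℝ) = inner ℝ u (P A v) :=
    fun A u v => (hsa A).isSymmetric u v
  have hmem_span : ∀ (A : Finset (Fin d)), ∀ a ∈ A, x a ∈ Submodule.span ℝ (x '' ↑A) :=
    fun A a ha => Submodule.subset_span ⟨a, ha, rfl⟩
  have hPfix : ∀ (A : Finset (Fin d)) (u : H), u ∈ Submodule.span ℝ (x '' ↑A) → P A u = u := by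
    intro A u hu
    rw [← hrange A] at hu
    obtain ⟨z, rfl⟩ := hu
    have h := DFunLike.congr_fun (hidem A) z
    simpa [ContinuousLinearMap.mul_apply] using h
  have hPzero : ∀ (A : Finset (Fin d)) (v : H), (∀ a ∈ A, (inner ℝ (x a) v : ℝ) = 0) → P A v = 0 := by
    intro A v hv
    have hv' : ∀ u ∈ Submodule.span ℝ (x '' ↑A), (inner ℝ u v : ℝ) = 0 := by
      intro u hu
      induction hu using Submodule.span_induction with
      | mem u hu => obtain ⟨a, ha, rfl⟩ := hu; exact hv a ha
      | zero => simp
      | add u w _ _ h1 h2 => rw [inner_add_left, h1, h2, add_zero]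
      | smul t u _ h1 => rw [real_inner_smul_left, h1, mul_zero]
    have h1 : (inner ℝ (P A v) v : ℝ) = 0 := hv' _ (by rw [← hrange A]; exact ⟨v, rfl⟩)
    have hid : P A (P A v) = P A v := by
      have h := DFunLike.congr_fun (hidem A) v
      simpa [ContinuousLinearMap.mul_apply] using h
    have h2 : (inner ℝ (P A v) (P A v) : ℝ) = 0 := by
      have h3 := hsym A v (P A v)
      rw [hid] at h3
      rw [h3, real_inner_comm, h1]
    exact inner_self_eq_zero.mp h2
  -- the key vector w = (1 - P S) (x j)
  set w : H := x j - P S (x j) with hwdef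
  have hwS : ∀ s ∈ S, (inner ℝ (x s) w : ℝ) = 0 := by
    intro s hs
    have h1 := (hsym S (x s) (x j)).symm
    rw [hPfix S (x s) (hmem_span S s hs)] at h1
    rw [hwdef, inner_sub_right, ← h1, sub_self]
  have hxiP : P {i} (x i) = x i := hPfix {i} _ (hmem_span {i} i (Finset.mem_singleton_self i))
  have hxjP : P {j} (x j) = x j := hPfix {j} _ (hmem_span {j} j (Finset.mem_singleton_self j))
  -- the RHS is equivalent to inner ℝ (x i) w = 0
  have hRHS : (P {i} * (1 - P S) * P {j} = 0) ↔ (inner ℝ (x i) w : ℝ) = 0 := by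
    constructor
    · intro h0
      have happ := DFunLike.congr_fun h0 (x j)
      have hPiw : P {i} w = 0 := by
        simpa [ContinuousLinearMap.mul_apply, ContinuousLinearMap.sub_apply,
          ContinuousLinearMap.one_apply, hxjP, hwdef] using happ
      calc (inner ℝ (x i) w : ℝ) = inner ℝ (P {i} (x i)) w := by rw [hxiP]
        _ = inner ℝ (x i) (P {i} w) := hsym {i} _ _
        _ = 0 := by rw [hPiw, inner_zero_right]
    · intro hκ
      have hPiw : P {i} w = 0 := by
        apply hPzero
        intro a ha
        rw [Finset.mem_singleton] at ha
        subst ha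
        exact hκ
      ext v
      obtain ⟨t, ht⟩ : ∃ t : ℝ, P {j} v = t • x j := by
        have hv : P {j} v ∈ Submodule.span ℝ (x '' (↑({j} : Finset (Fin d)))) := by
          rw [← hrange]; exact ⟨v, rfl⟩
        rw [Finset.coe_singleton, Set.image_singleton, Submodule.mem_span_singleton] at hv
        obtain ⟨t, ht⟩ := hv
        exact ⟨t, ht.symm⟩
      have hkey : P {i} ((1 - P S : H →L[ℝ] H) (t • x j)) = 0 := by
        have h1 : (1 - P S : H →L[ℝ] H) (t • x j) = t • w := by
          simp [ContinuousLinearMap.sub_apply, hwdef, map_smul, smul_sub]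
        rw [h1, map_smul, hPiw, smul_zero]
      rw [ContinuousLinearMap.zero_apply, ContinuousLinearMap.mul_apply,
        ContinuousLinearMap.mul_apply, ht]
      exact hkey
  -- the generic sum computation for mulVec
  have hmv : ∀ (f : Fin d → ℝ) (a : Fin d),
      (∑ b : ↥(insert i S),
        (inner ℝ (x a) (x (if (b : Fin d) = i then j else (b : Fin d))) : ℝ) * f ↑b)
        = (inner ℝ (x a) (f i • x j + ∑ k ∈ S, f k • x k) : ℝ) := by
    intro f a
    rw [Finset.sum_coe_sort (insert i S)
      (fun k => (inner ℝ (x a) (x (if k = i then j else k)) : ℝ) * f k)]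
    rw [Finset.sum_insert hiS, if_pos rfl]
    rw [inner_add_right, real_inner_smul_right, inner_sum]
    simp only [real_inner_smul_right]
    congr 1
    · ring
    · refine Finset.sum_congr rfl fun k hk => ?_
      rw [if_neg (by rintro rfl; exact hiS hk), mul_comm]
  rw [hRHS, ← Matrix.exists_mulVec_eq_zero_iff]
  constructor
  · rintro ⟨c, hc0, hcv⟩
    set c' : Fin d → ℝ := fun k => if h : k ∈ insert i S then c ⟨k, h⟩ else 0 with hc'
    have hcc : ∀ b : ↥(insert i S), c b = c' ↑b := by
      intro b
      simp only [hc']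
      rw [dif_pos b.2]
    set v : H := c' i • x j + ∑ k ∈ S, c' k • x k with hv
    have hinner : ∀ a ∈ insert i S, (inner ℝ (x a) v : ℝ) = 0 := by
      intro a ha
      have h : ∑ b : ↥(insert i S),
          (inner ℝ (x a) (x (if (b : Fin d) = i then j else (b : Fin d))) : ℝ) * c b = 0 := by
        simpa [Matrix.mulVec, dotProduct] using congrFun hcv ⟨a, ha⟩
      simp_rw [hcc] at h
      rw [hmv c' a] at h
      exact h
    by_cases hti : c' i = 0
    · exfalso
      have hvspan : v ∈ Submodule.span ℝ (x '' ↑S) := by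
        rw [hv, hti, zero_smul, zero_add]
        exact Submodule.sum_mem _ fun k hk => Submodule.smul_mem _ _ (hmem_span S k hk)
      have hv0 : v = 0 := by
        have h1 : P S v = v := hPfix S v hvspan
        have h2 : P S v = 0 := hPzero S v fun s hs => hinner s (Finset.mem_insert_of_mem hs)
        rw [h1] at h2
        exact h2
      have hsum0 : ∑ k : Fin d, (if k ∈ S then c' k else 0) • x k = 0 := by
        have hE : ∑ k : Fin d, (if k ∈ S then c' k else 0) • x k = ∑ k ∈ S, c' k • x k := by
          simp [ite_smul, Finset.sum_ite_mem]
        rw [hE]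
        have := hv0
        rw [hv, hti, zero_smul, zero_add] at this
        exact this
      have hg := Fintype.linearIndependent_iff.mp hli (fun k => if k ∈ S then c' k else 0) hsum0
      apply hc0
      funext b
      have hb := b.2
      rcases Finset.mem_insert.mp hb with hbi | hbS
      · have : c b = c' i := by rw [hcc b, hbi]
        rw [this, hti]
        rfl
      · have hz : c' ↑b = 0 := by simpa [hbS] using hg ↑b
        rw [hcc b, hz]
        rfl
    · have hspan2 : ∑ k ∈ S, c' k • x k ∈ Submodule.span ℝ (x '' ↑S) :=
        Submodule.sum_mem _ fun k hk => Submodule.smul_mem _ _ (hmem_span S k hk)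
      set w' : H := (c' i)⁻¹ • v with hw'
      have hxjw' : x j - w' ∈ Submodule.span ℝ (x '' ↑S) := by
        have hE : x j - w' = ((c' i)⁻¹) • (c' i • x j - v) := by
          rw [smul_sub, smul_smul, inv_mul_cancel₀ hti, one_smul, hw']
        rw [hE, hv]
        have : c' i • x j - (c' i • x j + ∑ k ∈ S, c' k • x k) = -(∑ k ∈ S, c' k • x k) := by
          abel
        rw [this]
        exact Submodule.smul_mem _ _ (Submodule.neg_mem _ hspan2)
      have hPSxj : P S (x j) = x j - w' := by
        have h1 : P S (x j - w') = x j - w' := hPfix S _ hxjw'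
        have h2 : P S w' = 0 := by
          apply hPzero
          intro s hs
          rw [hw', real_inner_smul_right, hinner s (Finset.mem_insert_of_mem hs), mul_zero]
        have h3 : P S (x j) = P S (x j - w') + P S w' := by
          rw [← map_add]
          congr 1
          abel
        rw [h3, h1, h2, add_zero]
      have hfin : (inner ℝ (x i) w : ℝ) = (c' i)⁻¹ * inner ℝ (x i) v := by
        rw [hwdef, hPSxj, sub_sub_cancel, hw', real_inner_smul_right]
      rw [hfin, hinner i (Finset.mem_insert_self i S), mul_zero]
  · intro hκ
    have hmem : P S (x j) ∈ Submodule.span ℝ (x '' ↑S) := by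
      rw [← hrange]; exact ⟨x j, rfl⟩
    rw [Finsupp.mem_span_image_iff_linearCombination] at hmem
    obtain ⟨l, hl, hsum⟩ := hmem
    have hsupp : l.support ⊆ S := fun k hk => hl hk
    have hsumS : ∑ k ∈ S, l k • x k = P S (x j) := by
      rw [← hsum, Finsupp.linearCombination_apply, Finsupp.sum]
      exact (Finset.sum_subset hsupp fun k _ hk =>
        by rw [Finsupp.notMem_support_iff.mp hk, zero_smul]).symm
    set f : Fin d → ℝ := fun k => if k = i then 1 else -(l k) with hf
    refine ⟨fun b => f ↑b, ?_, ?_⟩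
    · intro h0
      have h1 := congrFun h0 ⟨i, Finset.mem_insert_self i S⟩
      simp [hf] at h1
    · funext a
      obtain ⟨a, ha⟩ := a
      have hE : (Matrix.of fun (a b : ↥(insert i S)) =>
          (inner ℝ (x (a : Fin d)) (x (if (b : Fin d) = i then j else (b : Fin d))) : ℝ)).mulVec
          (fun b => f ↑b) ⟨a, ha⟩
          = ∑ b : ↥(insert i S),
            (inner ℝ (x a) (x (if (b : Fin d) = i then j else (b : Fin d))) : ℝ) * f ↑b := by
        simp [Matrix.mulVec, dotProduct]
      rw [hE, hmv f a]
      have hfi : f i = 1 := if_pos rfl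
      have hfS : ∑ k ∈ S, f k • x k = -(∑ k ∈ S, l k • x k) := by
        rw [← Finset.sum_neg_distrib]
        refine Finset.sum_congr rfl fun k hk => ?_
        rw [hf]
        simp only
        rw [if_neg (by rintro rfl; exact hiS hk), neg_smul]
      rw [hfi, one_smul, hfS, hsumS]
      have : x j + -(P S (x j)) = w := by rw [hwdef]; abel
      rw [this]
      rcases Finset.mem_insert.mp ha with rfl | haS
      · exact hκ
      · exact hwS a haS
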